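/- For every even integer n ≥ 16, there exists a cubic graph of order n with coalition number equal to 9. -/

import Mathlib

/-- `S` dominates the vertex `v`: `v ∈ S` or some vertex of `S` is adjacent to `v`. -/
def SimpleGraph.DominatesVert {V : Type*} (G : SimpleGraph V) (S : Finset V) (v : V) : Prop :=
  v ∈ S ∨ ∃ u ∈ S, G.Adj u v

/-- `S` is a dominating set of `G`. -/
def SimpleGraph.IsDominatingSet {V : Type*} (G : SimpleGraph V) (S : Finset V) : Prop :=
  ∀ v, G.DominatesVert S v

/-- A coalition partition of `G`: a partition of the vertex set into nonempty parts,
each of which is either a dominating singleton, or a non-dominating set forming a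
coalition (dominating union) with another non-dominating part. -/
def SimpleGraph.IsCoalitionPartition {V : Type*} [Fintype V] [DecidableEq V]
    (G : SimpleGraph V) (P : Finset (Finset V)) : Prop :=
  (∀ A ∈ P, A.Nonempty) ∧
  (∀ A ∈ P, ∀ B ∈ P, A ≠ B → Disjoint A B) ∧
  (∀ v : V, ∃ A ∈ P, v ∈ A) ∧
  ∀ A ∈ P,
    (∃ v, A = {v} ∧ G.IsDominatingSet A) ∨
    (¬ G.IsDominatingSet A ∧
      ∃ B ∈ P, B ≠ A ∧ ¬ G.IsDominatingSet B ∧ G.IsDominatingSet (A ∪ B))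

/-- The coalition number of `G`: the maximum number of parts in a coalition partition. -/
noncomputable def SimpleGraph.coalitionNumber {V : Type*} [Fintype V] [DecidableEq V]
    (G : SimpleGraph V) : ℕ :=
  sSup {k | ∃ P : Finset (Finset V), G.IsCoalitionPartition P ∧ P.card = k}


open Finset

variable {V : Type*} [Fintype V] [DecidableEq V]

namespace UB

variable {α : Type*} [DecidableEq α]

lemma ex3 {s : Finset α} (h : 3 ≤ s.card) :
    ∃ a b c, a ∈ s ∧ b ∈ s ∧ c ∈ s ∧ a ≠ b ∧ a ≠ c ∧ b ≠ c := by
  obtain ⟨a, ha⟩ := card_pos.mp (show 0 < s.card by omega)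
  have h2 : 2 ≤ (s.erase a).card := by
    have := card_erase_of_mem ha; omega
  obtain ⟨b, hb⟩ := card_pos.mp (show 0 < (s.erase a).card by omega)
  have h1 : 1 ≤ ((s.erase a).erase b).card := by
    have := card_erase_of_mem hb; omega
  obtain ⟨c, hc⟩ := card_pos.mp (show 0 < ((s.erase a).erase b).card by omega)
  obtain ⟨hcb, hc'⟩ := mem_erase.mp hc
  obtain ⟨hca, hcs⟩ := mem_erase.mp hc'
  obtain ⟨hba, hbs⟩ := mem_erase.mp hb
  exact ⟨a, b, c, ha, hbs, hcs, (Ne.symm hba), (Ne.symm hca), (Ne.symm hcb)⟩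

lemma ex4 {s : Finset α} (h : 4 ≤ s.card) :
    ∃ a b c d, a ∈ s ∧ b ∈ s ∧ c ∈ s ∧ d ∈ s ∧
      a ≠ b ∧ a ≠ c ∧ a ≠ d ∧ b ≠ c ∧ b ≠ d ∧ c ≠ d := by
  obtain ⟨a, ha⟩ := card_pos.mp (show 0 < s.card by omega)
  have h3 : 3 ≤ (s.erase a).card := by have := card_erase_of_mem ha; omega
  obtain ⟨b, c, d, hb, hc, hd, hbc, hbd, hcd⟩ := ex3 h3
  obtain ⟨hba, hbs⟩ := mem_erase.mp hb
  obtain ⟨hca, hcs⟩ := mem_erase.mp hc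
  obtain ⟨hda, hds⟩ := mem_erase.mp hd
  exact ⟨a, b, c, d, ha, hbs, hcs, hds, Ne.symm hba, Ne.symm hca, Ne.symm hda, hbc, hbd, hcd⟩

lemma card5 {a b c d e : α} (hab : a ≠ b) (hac : a ≠ c) (had : a ≠ d) (hae : a ≠ e)
    (hbc : b ≠ c) (hbd : b ≠ d) (hbe : b ≠ e) (hcd : c ≠ d) (hce : c ≠ e) (hde : d ≠ e) :
    ({a,b,c,d,e} : Finset α).card = 5 := by
  rw [card_insert_of_notMem (by simp [hab, hac, had, hae]),
    card_insert_of_notMem (by simp [hbc, hbd, hbe]),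
    card_insert_of_notMem (by simp [hcd, hce]),
    card_insert_of_notMem (by simp [hde]), card_singleton]

variable (G : SimpleGraph V) [DecidableRel G.Adj]

def cN (v : V) : Finset V := insert v (G.neighborFinset v)

lemma mem_cN {u v : V} : u ∈ cN G v ↔ u = v ∨ G.Adj u v := by
  simp only [cN, mem_insert, SimpleGraph.mem_neighborFinset]
  constructor
  · rintro (h | h)
    · exact Or.inl h
    · exact Or.inr h.symm
  · rintro (h | h)
    · exact Or.inl h
    · exact Or.inr h.symm

lemma dominatesVert_iff {S : Finset V} {v : V} :
    G.DominatesVert S v ↔ (S ∩ cN G v).Nonempty := by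
  constructor
  · rintro (h | ⟨u, hu, hadj⟩)
    · exact ⟨v, by simp [mem_inter, mem_cN, h]⟩
    · exact ⟨u, by simp [mem_inter, mem_cN, hu, hadj]⟩
  · rintro ⟨u, hu⟩
    rw [mem_inter, mem_cN G] at hu
    rcases hu with ⟨hus, rfl | hadj⟩
    · exact Or.inl hus
    · exact Or.inr ⟨u, hus, hadj⟩

lemma card_cN_le (hdeg : ∀ v, G.degree v ≤ 3) (v : V) : (cN G v).card ≤ 4 := by
  calc (cN G v).card ≤ (G.neighborFinset v).card + 1 := card_insert_le _ _
  _ ≤ 4 := by have := hdeg v; rw [SimpleGraph.degree] at this; omega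

lemma card_dom (hdeg : ∀ v, G.degree v ≤ 3) {S : Finset V}
    (hS : G.IsDominatingSet S) : Fintype.card V ≤ 4 * S.card := by
  have hsub : (univ : Finset V) ⊆ S.biUnion (cN G) := by
    intro v _
    rw [mem_biUnion]
    rcases hS v with h | ⟨u, hu, hadj⟩
    · exact ⟨v, h, by simp [cN]⟩
    · exact ⟨u, hu, by rw [mem_cN]; exact Or.inr hadj.symm⟩
  calc Fintype.card V = (univ : Finset V).card := by rw [card_univ]
  _ ≤ (S.biUnion (cN G)).card := card_le_card hsub
  _ ≤ ∑ u ∈ S, (cN G u).card := card_biUnion_le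
  _ ≤ ∑ _u ∈ S, 4 := sum_le_sum (fun u _ => card_cN_le G hdeg u)
  _ = 4 * S.card := by rw [sum_const, smul_eq_mul, mul_comm]

variable (P : Finset (Finset V))

def Rl (A B : Finset V) : Prop :=
  A ∈ P ∧ B ∈ P ∧ A ≠ B ∧ G.IsDominatingSet (A ∪ B)

def M2 : Prop := ∃ a b c d, Rl G P a b ∧ Rl G P c d ∧
  ([a,b,c,d] : List (Finset V)).Pairwise (· ≠ ·)

def M3 : Prop := ∃ a b c d e f, Rl G P a b ∧ Rl G P c d ∧ Rl G P e f ∧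
  ([a,b,c,d,e,f] : List (Finset V)).Pairwise (· ≠ ·)

def M4 : Prop := ∃ a b c d e f g h, Rl G P a b ∧ Rl G P c d ∧ Rl G P e f ∧ Rl G P g h ∧
  ([a,b,c,d,e,f,g,h] : List (Finset V)).Pairwise (· ≠ ·)

variable {G P}

/-- five pairwise-disjoint sets cannot all meet a closed neighborhood -/
lemma five_le_four (hdeg : ∀ v, G.degree v ≤ 3)
    (hdis : ∀ A ∈ P, ∀ B ∈ P, A ≠ B → Disjoint A B) (w : V)
    {S : Finset (Finset V)} (hS : S ⊆ P) (h5 : S.card = 5)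
    (hmeet : ∀ A ∈ S, (A ∩ cN G w).Nonempty) : False := by
  have key : S.card ≤ (S.biUnion (fun A => A ∩ cN G w)).card := by
    rw [card_biUnion]
    · calc S.card = ∑ _A ∈ S, 1 := by simp
      _ ≤ ∑ A ∈ S, (A ∩ cN G w).card :=
        sum_le_sum (fun A hA => card_pos.mpr (hmeet A hA))
    · intro x hx y hy hxy
      exact Disjoint.mono inter_subset_left inter_subset_left
        (hdis x (hS hx) y (hS hy) hxy)
  have sub : S.biUnion (fun A => A ∩ cN G w) ⊆ cN G w := by
    intro v hv
    rw [mem_biUnion] at hv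
    obtain ⟨A, _, hvA⟩ := hv
    exact (mem_inter.mp hvA).2
  have := card_le_card sub
  have := card_cN_le G hdeg w
  omega

/-- the 5-set endgame -/
lemma endg (hdeg : ∀ v, G.degree v ≤ 3)
    (hdis : ∀ A ∈ P, ∀ B ∈ P, A ≠ B → Disjoint A B) (w : V)
    {a b c d e : Finset V} (ha : a ∈ P) (hb : b ∈ P) (hc : c ∈ P) (hd : d ∈ P) (he : e ∈ P)
    (hab : a ≠ b) (hac : a ≠ c) (had : a ≠ d) (hae : a ≠ e)
    (hbc : b ≠ c) (hbd : b ≠ d) (hbe : b ≠ e) (hcd : c ≠ d) (hce : c ≠ e) (hde : d ≠ e)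
    (ma : (a ∩ cN G w).Nonempty) (mb : (b ∩ cN G w).Nonempty) (mc : (c ∩ cN G w).Nonempty)
    (md : (d ∩ cN G w).Nonempty) (me : (e ∩ cN G w).Nonempty) : False := by
  refine five_le_four hdeg hdis w (S := {a,b,c,d,e}) ?_
    (card5 hab hac had hae hbc hbd hbe hcd hce hde) ?_
  · intro X hX
    simp only [mem_insert, mem_singleton] at hX
    rcases hX with rfl | rfl | rfl | rfl | rfl <;> assumption
  · intro X hX
    simp only [mem_insert, mem_singleton] at hX
    rcases hX with rfl | rfl | rfl | rfl | rfl <;> assumption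

/-- a coalition partner meets the closed neighborhood of any vertex missed by B -/
lemma meet_partner {X B : Finset V} {w : V} (hdom : G.IsDominatingSet (X ∪ B))
    (hw : ¬ G.DominatesVert B w) : (X ∩ cN G w).Nonempty := by
  have h := (dominatesVert_iff G).mp (hdom w)
  rw [union_inter_distrib_right] at h
  rcases h with ⟨u, hu⟩
  rcases mem_union.mp hu with h' | h'
  · exact ⟨u, h'⟩
  · exact absurd ((dominatesVert_iff G).mpr ⟨u, h'⟩) hw

lemma meet_or {A B : Finset V} {w : V} (hdom : G.IsDominatingSet (A ∪ B)) :
    (A ∩ cN G w).Nonempty ∨ (B ∩ cN G w).Nonempty := by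
  have h := (dominatesVert_iff G).mp (hdom w)
  rw [union_inter_distrib_right] at h
  rcases h with ⟨u, hu⟩
  rcases mem_union.mp hu with h' | h'
  · exact Or.inl ⟨u, h'⟩
  · exact Or.inr ⟨u, h'⟩

theorem card_le_nine (hn : 16 ≤ Fintype.card V) (hdeg : ∀ v, G.degree v ≤ 3)
    (hne : ∀ A ∈ P, A.Nonempty)
    (hdis : ∀ A ∈ P, ∀ B ∈ P, A ≠ B → Disjoint A B)
    (hcov : ∀ v : V, ∃ A ∈ P, v ∈ A)
    (hco : ∀ A ∈ P, (∃ v, A = {v} ∧ G.IsDominatingSet A) ∨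
      (¬ G.IsDominatingSet A ∧ ∃ B ∈ P, B ≠ A ∧ ¬ G.IsDominatingSet B ∧
        G.IsDominatingSet (A ∪ B))) :
    P.card ≤ 9 := by
  by_contra hc
  push_neg at hc
  have hcard : 10 ≤ P.card := hc
  clear hc
  -- no dominating part
  have hnodom : ∀ A ∈ P, ¬ G.IsDominatingSet A := by
    intro A hA hdom
    rcases hco A hA with ⟨v, rfl, _⟩ | ⟨hnd, _⟩
    · have h4 := card_dom G hdeg hdom
      rw [card_singleton] at h4
      omega
    · exact hnd hdom
  have hpartner : ∀ A ∈ P, ∃ B, Rl G P A B := by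
    intro A hA
    rcases hco A hA with ⟨v, rfl, hd⟩ | ⟨hnd, B, hB, hBA, hndB, hd⟩
    · exact absurd hd (hnodom _ hA)
    · exact ⟨B, hA, hB, hBA.symm, hd⟩
  have hsum : ∑ A ∈ P, A.card = Fintype.card V := by
    have huniv : (univ : Finset V) = P.biUnion id := by
      apply Finset.ext
      intro v
      simp only [mem_univ, mem_biUnion, id, true_iff]
      exact hcov v
    have hcb : (P.biUnion id).card = ∑ u ∈ P, (id u).card :=
      card_biUnion (fun x hx y hy hxy => hdis x hx y hy hxy)
    rw [← card_univ, huniv, hcb]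
    rfl
  have hmiss : ∀ A ∈ P, ∃ w, ¬ G.DominatesVert A w := by
    intro A hA
    by_contra h
    push_neg at h
    exact hnodom A hA (fun v => h v)
  have hpair : ∀ {A B : Finset V}, G.IsDominatingSet (A ∪ B) →
      Fintype.card V ≤ 4 * A.card + 4 * B.card := by
    intro A B hd
    have h1 := card_dom G hdeg hd
    have h2 := card_union_le A B
    omega
  -- ¬ M4 : four disjoint coalition pairs are impossible
  have hM4 : ¬ M4 G P := by
    rintro ⟨a, b, c, d, e, f, g, h, r1, r2, r3, r4, hpw⟩
    simp at hpw
    obtain ⟨⟨hab, hac, had, hae, haf, hag, hah⟩, ⟨hbc, hbd, hbe, hbf, hbg, hbh⟩,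
      ⟨hcd, hce, hcf, hcg, hch⟩, ⟨hde, hdf, hdg, hdh⟩, ⟨hef, heg, heh⟩, ⟨hfg, hfh⟩, hgh⟩ := hpw
    obtain ⟨haP, hbP, -, hd1⟩ := r1
    obtain ⟨hcP, hdP, -, hd2⟩ := r2
    obtain ⟨heP, hfP, -, hd3⟩ := r3
    obtain ⟨hgP, hhP, -, hd4⟩ := r4
    set S8 : Finset (Finset V) := {a, b, c, d, e, f, g, h} with hS8def
    have hS8card : S8.card ≤ 8 := by
      rw [hS8def]
      refine le_trans (card_insert_le _ _) (Nat.succ_le_succ ?_)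
      refine le_trans (card_insert_le _ _) (Nat.succ_le_succ ?_)
      refine le_trans (card_insert_le _ _) (Nat.succ_le_succ ?_)
      refine le_trans (card_insert_le _ _) (Nat.succ_le_succ ?_)
      refine le_trans (card_insert_le _ _) (Nat.succ_le_succ ?_)
      refine le_trans (card_insert_le _ _) (Nat.succ_le_succ ?_)
      refine le_trans (card_insert_le _ _) (Nat.succ_le_succ ?_)
      simp
    have h2le : 2 ≤ (P \ S8).card := by
      have hle := Finset.card_le_card_sdiff_add_card (s := P) (t := S8)
      omega
    obtain ⟨X, hX, Y, hY, hXY⟩ := one_lt_card.mp (by omega : 1 < (P \ S8).card)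
    obtain ⟨hXP, hXS8⟩ := mem_sdiff.mp hX
    obtain ⟨hYP, hYS8⟩ := mem_sdiff.mp hY
    simp only [hS8def, mem_insert, mem_singleton] at hXS8 hYS8
    push_neg at hXS8 hYS8
    obtain ⟨hXa, hXb, hXc, hXd, hXe, hXf, hXg, hXh⟩ := hXS8
    obtain ⟨hYa, hYb, hYc, hYd, hYe, hYf, hYg, hYh⟩ := hYS8
    have hsub10 : insert X (insert Y S8) ⊆ P := by
      intro Z hZ
      simp only [hS8def, mem_insert, mem_singleton] at hZ
      rcases hZ with rfl | rfl | rfl | rfl | rfl | rfl | rfl | rfl | rfl | rfl <;> assumption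
    have hsum10 : ∑ A ∈ insert X (insert Y S8), A.card =
        X.card + (Y.card + (a.card + (b.card + (c.card + (d.card + (e.card +
          (f.card + (g.card + h.card)))))))) := by
      rw [sum_insert (by
        simp only [hS8def, mem_insert, mem_singleton]; push_neg
        exact ⟨hXY, hXa, hXb, hXc, hXd, hXe, hXf, hXg, hXh⟩)]
      rw [sum_insert (by
        simp only [hS8def, mem_insert, mem_singleton]; push_neg
        exact ⟨hYa, hYb, hYc, hYd, hYe, hYf, hYg, hYh⟩)]
      rw [hS8def]
      rw [sum_insert (by
        simp only [mem_insert, mem_singleton]; push_neg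
        exact ⟨hab, hac, had, hae, haf, hag, hah⟩)]
      rw [sum_insert (by
        simp only [mem_insert, mem_singleton]; push_neg
        exact ⟨hbc, hbd, hbe, hbf, hbg, hbh⟩)]
      rw [sum_insert (by
        simp only [mem_insert, mem_singleton]; push_neg
        exact ⟨hcd, hce, hcf, hcg, hch⟩)]
      rw [sum_insert (by
        simp only [mem_insert, mem_singleton]; push_neg
        exact ⟨hde, hdf, hdg, hdh⟩)]
      rw [sum_insert (by
        simp only [mem_insert, mem_singleton]; push_neg
        exact ⟨hef, heg, heh⟩)]
      rw [sum_insert (by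
        simp only [mem_insert, mem_singleton]; push_neg
        exact ⟨hfg, hfh⟩)]
      rw [sum_insert (by simp only [mem_singleton]; exact hgh), sum_singleton]
    have hle10 : ∑ A ∈ insert X (insert Y S8), A.card ≤ Fintype.card V := by
      rw [← hsum]
      exact sum_le_sum_of_subset hsub10
    have hp1 := hpair hd1
    have hp2 := hpair hd2
    have hp3 := hpair hd3
    have hp4 := hpair hd4
    have hX1 : 1 ≤ X.card := card_pos.mpr (hne X hXP)
    have hY1 : 1 ≤ Y.card := card_pos.mpr (hne Y hYP)
    omega
  -- there is at least one coalition pair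
  have hM1 : ∃ A B, Rl G P A B := by
    obtain ⟨A, hA⟩ := card_pos.mp (show 0 < P.card by omega)
    obtain ⟨B, hB⟩ := hpartner A hA
    exact ⟨A, B, hB⟩

  -- main case analysis on maximum matching size
  by_cases hM3 : M3 G P
  · -- k = 3 : three disjoint pairs form a maximum matching
    obtain ⟨a1, b1, a2, b2, a3, b3, r1, r2, r3, hpw⟩ := hM3
    simp at hpw
    obtain ⟨⟨h12, h13, h14, h15, h16⟩, ⟨h23, h24, h25, h26⟩, ⟨h34, h35, h36⟩,
      ⟨h45, h46⟩, h56⟩ := hpw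
    obtain ⟨ha1, hb1, -, hd1⟩ := r1
    obtain ⟨ha2, hb2, -, hd2⟩ := r2
    obtain ⟨ha3, hb3, -, hd3⟩ := r3
    have hMstcard : ({a1, b1, a2, b2, a3, b3} : Finset (Finset V)).card ≤ 6 := by
      refine le_trans (card_insert_le _ _) (Nat.succ_le_succ ?_)
      refine le_trans (card_insert_le _ _) (Nat.succ_le_succ ?_)
      refine le_trans (card_insert_le _ _) (Nat.succ_le_succ ?_)
      refine le_trans (card_insert_le _ _) (Nat.succ_le_succ ?_)
      exact le_trans (card_insert_le _ _) (by simp)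
    have hUcard : 4 ≤ (P \ {a1, b1, a2, b2, a3, b3}).card := by
      have := Finset.card_le_card_sdiff_add_card (s := P) (t := {a1, b1, a2, b2, a3, b3})
      omega
    have hmemU : ∀ u ∈ P \ {a1, b1, a2, b2, a3, b3},
        u ≠ a1 ∧ u ≠ b1 ∧ u ≠ a2 ∧ u ≠ b2 ∧ u ≠ a3 ∧ u ≠ b3 := by
      intro u hu
      have := (mem_sdiff.mp hu).2
      simp only [mem_insert, mem_singleton] at this
      push_neg at this
      exact this
    have hup : ∀ u ∈ P \ {a1, b1, a2, b2, a3, b3},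
        ∃ B ∈ ({a1, b1, a2, b2, a3, b3} : Finset (Finset V)), G.IsDominatingSet (u ∪ B) := by
      intro u hu
      obtain ⟨huP, -⟩ := mem_sdiff.mp hu
      obtain ⟨hua1, hub1, hua2, hub2, hua3, hub3⟩ := hmemU u hu
      obtain ⟨p, -, hpP, hupne, hd⟩ := hpartner u huP
      by_cases hpM : p ∈ ({a1, b1, a2, b2, a3, b3} : Finset (Finset V))
      · exact ⟨p, hpM, hd⟩
      · exfalso
        simp only [mem_insert, mem_singleton] at hpM
        push_neg at hpM
        obtain ⟨hpa1, hpb1, hpa2, hpb2, hpa3, hpb3⟩ := hpM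
        refine hM4 ⟨a1, b1, a2, b2, a3, b3, u, p, ⟨ha1, hb1, h12, hd1⟩, ⟨ha2, hb2, h34, hd2⟩,
          ⟨ha3, hb3, h56, hd3⟩, ⟨huP, hpP, hupne, hd⟩, ?_⟩
        simp
        exact ⟨⟨h12, h13, h14, h15, h16, Ne.symm hua1, Ne.symm hpa1⟩,
          ⟨h23, h24, h25, h26, Ne.symm hub1, Ne.symm hpb1⟩,
          ⟨h34, h35, h36, Ne.symm hua2, Ne.symm hpa2⟩,
          ⟨h45, h46, Ne.symm hub2, Ne.symm hpb2⟩,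
          ⟨h56, Ne.symm hua3, Ne.symm hpa3⟩, ⟨Ne.symm hub3, Ne.symm hpb3⟩, hupne⟩
    choose fch hf1 hf2 using hup
    set g : Finset V → Finset V :=
      fun u => if h : u ∈ P \ {a1, b1, a2, b2, a3, b3} then fch u h else ∅ with hgdef
    have hg : ∀ u ∈ P \ {a1, b1, a2, b2, a3, b3},
        g u ∈ ({a1, b1, a2, b2, a3, b3} : Finset (Finset V)) ∧
          G.IsDominatingSet (u ∪ g u) := by
      intro u hu
      rw [hgdef]
      simp only [dif_pos hu]
      exact ⟨hf1 u hu, hf2 u hu⟩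
    -- if two far parts share a partner, we get the five-set contradiction
    have fin3' : ∀ B Bm c1 c2 c3 c4 u u' : Finset V, B ∈ P → Bm ∈ P →
        c1 ∈ P → c2 ∈ P → c3 ∈ P → c4 ∈ P →
        u ∈ P \ {a1, b1, a2, b2, a3, b3} → u' ∈ P \ {a1, b1, a2, b2, a3, b3} →
        Bm ∈ ({a1, b1, a2, b2, a3, b3} : Finset (Finset V)) →
        c1 ∈ ({a1, b1, a2, b2, a3, b3} : Finset (Finset V)) →
        c2 ∈ ({a1, b1, a2, b2, a3, b3} : Finset (Finset V)) →
        c3 ∈ ({a1, b1, a2, b2, a3, b3} : Finset (Finset V)) →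
        c4 ∈ ({a1, b1, a2, b2, a3, b3} : Finset (Finset V)) →
        Bm ≠ c1 → Bm ≠ c2 → Bm ≠ c3 → Bm ≠ c4 → c1 ≠ c3 → c1 ≠ c4 → c2 ≠ c3 → c2 ≠ c4 →
        G.IsDominatingSet (Bm ∪ B) → G.IsDominatingSet (c1 ∪ c2) →
        G.IsDominatingSet (c3 ∪ c4) →
        G.IsDominatingSet (u ∪ B) → G.IsDominatingSet (u' ∪ B) → u ≠ u' → False := by
      intro B Bm c1 c2 c3 c4 u u' hBP hBmP hc1P hc2P hc3P hc4P huU hu'U hBmM hc1M hc2M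
        hc3M hc4M n1 n2 n3 n4 n5 n6 n7 n8 hdBm hdc12 hdc34 hdu hdu' huu'
      have hnM : ∀ v ∈ P \ ({a1, b1, a2, b2, a3, b3} : Finset (Finset V)),
          ∀ W ∈ ({a1, b1, a2, b2, a3, b3} : Finset (Finset V)), v ≠ W := by
        intro v hv W hW hEq
        exact (mem_sdiff.mp hv).2 (hEq ▸ hW)
      obtain ⟨w, hw⟩ := hmiss B hBP
      have mu : (u ∩ cN G w).Nonempty := meet_partner hdu hw
      have mu' : (u' ∩ cN G w).Nonempty := meet_partner hdu' hw
      have mBm : (Bm ∩ cN G w).Nonempty := meet_partner hdBm hw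
      rcases meet_or hdc12 (w := w) with mc | mc <;>
        rcases meet_or hdc34 (w := w) with md | md
      · exact endg hdeg hdis w (mem_sdiff.mp huU).1 (mem_sdiff.mp hu'U).1 hBmP hc1P hc3P
          huu' (hnM u huU Bm hBmM) (hnM u huU c1 hc1M) (hnM u huU c3 hc3M)
          (hnM u' hu'U Bm hBmM) (hnM u' hu'U c1 hc1M) (hnM u' hu'U c3 hc3M)
          n1 n3 n5 mu mu' mBm mc md
      · exact endg hdeg hdis w (mem_sdiff.mp huU).1 (mem_sdiff.mp hu'U).1 hBmP hc1P hc4P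
          huu' (hnM u huU Bm hBmM) (hnM u huU c1 hc1M) (hnM u huU c4 hc4M)
          (hnM u' hu'U Bm hBmM) (hnM u' hu'U c1 hc1M) (hnM u' hu'U c4 hc4M)
          n1 n4 n6 mu mu' mBm mc md
      · exact endg hdeg hdis w (mem_sdiff.mp huU).1 (mem_sdiff.mp hu'U).1 hBmP hc2P hc3P
          huu' (hnM u huU Bm hBmM) (hnM u huU c2 hc2M) (hnM u huU c3 hc3M)
          (hnM u' hu'U Bm hBmM) (hnM u' hu'U c2 hc2M) (hnM u' hu'U c3 hc3M)
          n2 n3 n7 mu mu' mBm mc md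
      · exact endg hdeg hdis w (mem_sdiff.mp huU).1 (mem_sdiff.mp hu'U).1 hBmP hc2P hc4P
          huu' (hnM u huU Bm hBmM) (hnM u huU c2 hc2M) (hnM u huU c4 hc4M)
          (hnM u' hu'U Bm hBmM) (hnM u' hu'U c2 hc2M) (hnM u' hu'U c4 hc4M)
          n2 n4 n8 mu mu' mBm mc md
    have hMa1 : a1 ∈ ({a1, b1, a2, b2, a3, b3} : Finset (Finset V)) := by simp
    have hMb1 : b1 ∈ ({a1, b1, a2, b2, a3, b3} : Finset (Finset V)) := by simp
    have hMa2 : a2 ∈ ({a1, b1, a2, b2, a3, b3} : Finset (Finset V)) := by simp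
    have hMb2 : b2 ∈ ({a1, b1, a2, b2, a3, b3} : Finset (Finset V)) := by simp
    have hMa3 : a3 ∈ ({a1, b1, a2, b2, a3, b3} : Finset (Finset V)) := by simp
    have hMb3 : b3 ∈ ({a1, b1, a2, b2, a3, b3} : Finset (Finset V)) := by simp
    have finB : ∀ u u' : Finset V, u ∈ P \ {a1, b1, a2, b2, a3, b3} →
        u' ∈ P \ {a1, b1, a2, b2, a3, b3} → u ≠ u' → g u = g u' → False := by
      intro u u' huU hu'U huu' hEq
      have hdu : G.IsDominatingSet (u ∪ g u) := (hg u huU).2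
      have hdu' : G.IsDominatingSet (u' ∪ g u) := hEq ▸ (hg u' hu'U).2
      have hBM := (hg u huU).1
      simp only [mem_insert, mem_singleton] at hBM
      rcases hBM with hB | hB | hB | hB | hB | hB <;> rw [hB] at hdu hdu'
      · exact fin3' a1 b1 a2 b2 a3 b3 u u' ha1 hb1 ha2 hb2 ha3 hb3 huU hu'U
          hMb1 hMa2 hMb2 hMa3 hMb3 h23 h24 h25 h26 h35 h36 h45 h46
          ((union_comm a1 b1) ▸ hd1) hd2 hd3 hdu hdu' huu'
      · exact fin3' b1 a1 a2 b2 a3 b3 u u' hb1 ha1 ha2 hb2 ha3 hb3 huU hu'U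
          hMa1 hMa2 hMb2 hMa3 hMb3 h13 h14 h15 h16 h35 h36 h45 h46
          hd1 hd2 hd3 hdu hdu' huu'
      · exact fin3' a2 b2 a1 b1 a3 b3 u u' ha2 hb2 ha1 hb1 ha3 hb3 huU hu'U
          hMb2 hMa1 hMb1 hMa3 hMb3 (Ne.symm h14) (Ne.symm h24) h45 h46 h15 h16 h25 h26
          ((union_comm a2 b2) ▸ hd2) hd1 hd3 hdu hdu' huu'
      · exact fin3' b2 a2 a1 b1 a3 b3 u u' hb2 ha2 ha1 hb1 ha3 hb3 huU hu'U
          hMa2 hMa1 hMb1 hMa3 hMb3 (Ne.symm h13) (Ne.symm h23) h35 h36 h15 h16 h25 h26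
          hd2 hd1 hd3 hdu hdu' huu'
      · exact fin3' a3 b3 a1 b1 a2 b2 u u' ha3 hb3 ha1 hb1 ha2 hb2 huU hu'U
          hMb3 hMa1 hMb1 hMa2 hMb2 (Ne.symm h16) (Ne.symm h26) (Ne.symm h36) (Ne.symm h46)
          h13 h14 h23 h24 ((union_comm a3 b3) ▸ hd3) hd1 hd2 hdu hdu' huu'
      · exact fin3' b3 a3 a1 b1 a2 b2 u u' hb3 ha3 ha1 hb1 ha2 hb2 huU hu'U
          hMa3 hMa1 hMb1 hMa2 hMb2 (Ne.symm h15) (Ne.symm h25) (Ne.symm h35) (Ne.symm h45)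
          h13 h14 h23 h24 hd3 hd1 hd2 hdu hdu' huu'
    obtain ⟨u1, u2, u3, u4, hu1, hu2, hu3, hu4, d12, d13, d14, d23, d24, d34⟩ := ex4 hUcard
    by_cases e12 : g u1 = g u2
    · exact finB u1 u2 hu1 hu2 d12 e12
    by_cases e13 : g u1 = g u3
    · exact finB u1 u3 hu1 hu3 d13 e13
    by_cases e14 : g u1 = g u4
    · exact finB u1 u4 hu1 hu4 d14 e14
    by_cases e23 : g u2 = g u3
    · exact finB u2 u3 hu2 hu3 d23 e23
    by_cases e24 : g u2 = g u4
    · exact finB u2 u4 hu2 hu4 d24 e24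
    by_cases e34 : g u3 = g u4
    · exact finB u3 u4 hu3 hu4 d34 e34
    -- otherwise the four far parts have four distinct partners : a 4-matching
    have hnM : ∀ v ∈ P \ ({a1, b1, a2, b2, a3, b3} : Finset (Finset V)),
        ∀ W ∈ ({a1, b1, a2, b2, a3, b3} : Finset (Finset V)), v ≠ W := by
      intro v hv W hW hEq
      exact (mem_sdiff.mp hv).2 (hEq ▸ hW)
    have hRu : ∀ u ∈ P \ ({a1, b1, a2, b2, a3, b3} : Finset (Finset V)), Rl G P u (g u) := by
      intro u hu
      have hgP : g u ∈ P := by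
        have := (hg u hu).1
        simp only [mem_insert, mem_singleton] at this
        rcases this with h | h | h | h | h | h <;> rw [h] <;> assumption
      exact ⟨(mem_sdiff.mp hu).1, hgP, hnM u hu (g u) (hg u hu).1, (hg u hu).2⟩
    refine hM4 ⟨u1, g u1, u2, g u2, u3, g u3, u4, g u4,
      hRu u1 hu1, hRu u2 hu2, hRu u3 hu3, hRu u4 hu4, ?_⟩
    simp
    exact ⟨⟨hnM u1 hu1 (g u1) (hg u1 hu1).1, d12, hnM u1 hu1 (g u2) (hg u2 hu2).1, d13,
        hnM u1 hu1 (g u3) (hg u3 hu3).1, d14, hnM u1 hu1 (g u4) (hg u4 hu4).1⟩,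
      ⟨Ne.symm (hnM u2 hu2 (g u1) (hg u1 hu1).1), e12,
        Ne.symm (hnM u3 hu3 (g u1) (hg u1 hu1).1), e13,
        Ne.symm (hnM u4 hu4 (g u1) (hg u1 hu1).1), e14⟩,
      ⟨hnM u2 hu2 (g u2) (hg u2 hu2).1, d23, hnM u2 hu2 (g u3) (hg u3 hu3).1, d24,
        hnM u2 hu2 (g u4) (hg u4 hu4).1⟩,
      ⟨Ne.symm (hnM u3 hu3 (g u2) (hg u2 hu2).1), e23,
        Ne.symm (hnM u4 hu4 (g u2) (hg u2 hu2).1), e24⟩,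
      ⟨hnM u3 hu3 (g u3) (hg u3 hu3).1, d34, hnM u3 hu3 (g u4) (hg u4 hu4).1⟩,
      ⟨Ne.symm (hnM u4 hu4 (g u3) (hg u3 hu3).1), e34⟩,
      hnM u4 hu4 (g u4) (hg u4 hu4).1⟩
  · by_cases hM2 : M2 G P
    · -- k = 2 : two disjoint pairs form a maximum matching
      obtain ⟨a1, b1, a2, b2, r1, r2, hpw⟩ := hM2
      simp at hpw
      obtain ⟨⟨h12, h13, h14⟩, ⟨h23, h24⟩, h34⟩ := hpw
      obtain ⟨ha1, hb1, -, hd1⟩ := r1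
      obtain ⟨ha2, hb2, -, hd2⟩ := r2
      have hMstcard : ({a1, b1, a2, b2} : Finset (Finset V)).card ≤ 4 := by
        refine le_trans (card_insert_le _ _) (Nat.succ_le_succ ?_)
        refine le_trans (card_insert_le _ _) (Nat.succ_le_succ ?_)
        exact le_trans (card_insert_le _ _) (by simp)
      have hUcard : 6 ≤ (P \ {a1, b1, a2, b2}).card := by
        have := Finset.card_le_card_sdiff_add_card (s := P) (t := {a1, b1, a2, b2})
        omega
      have hmemU : ∀ u ∈ P \ {a1, b1, a2, b2}, u ≠ a1 ∧ u ≠ b1 ∧ u ≠ a2 ∧ u ≠ b2 := by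
        intro u hu
        have := (mem_sdiff.mp hu).2
        simp only [mem_insert, mem_singleton] at this
        push_neg at this
        exact this
      have hup : ∀ u ∈ P \ {a1, b1, a2, b2}, ∃ B ∈ ({a1, b1, a2, b2} : Finset (Finset V)),
          G.IsDominatingSet (u ∪ B) := by
        intro u hu
        obtain ⟨huP, -⟩ := mem_sdiff.mp hu
        obtain ⟨hua1, hub1, hua2, hub2⟩ := hmemU u hu
        obtain ⟨p, -, hpP, hupne, hd⟩ := hpartner u huP
        by_cases hpM : p ∈ ({a1, b1, a2, b2} : Finset (Finset V))
        · exact ⟨p, hpM, hd⟩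
        · exfalso
          simp only [mem_insert, mem_singleton] at hpM
          push_neg at hpM
          obtain ⟨hpa1, hpb1, hpa2, hpb2⟩ := hpM
          refine hM3 ⟨a1, b1, a2, b2, u, p, ⟨ha1, hb1, h12, hd1⟩, ⟨ha2, hb2, h34, hd2⟩,
            ⟨huP, hpP, hupne, hd⟩, ?_⟩
          simp
          exact ⟨⟨h12, h13, h14, Ne.symm hua1, Ne.symm hpa1⟩,
            ⟨h23, h24, Ne.symm hub1, Ne.symm hpb1⟩,
            ⟨h34, Ne.symm hua2, Ne.symm hpa2⟩, ⟨Ne.symm hub2, Ne.symm hpb2⟩, hupne⟩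
      choose fch hf1 hf2 using hup
      set g : Finset V → Finset V :=
        fun u => if h : u ∈ P \ {a1, b1, a2, b2} then fch u h else ∅ with hgdef
      have hg : ∀ u ∈ P \ {a1, b1, a2, b2},
          g u ∈ ({a1, b1, a2, b2} : Finset (Finset V)) ∧ G.IsDominatingSet (u ∪ g u) := by
        intro u hu
        rw [hgdef]
        simp only [dif_pos hu]
        exact ⟨hf1 u hu, hf2 u hu⟩
      set F : Finset V → Finset (Finset V) :=
        fun X => (P \ {a1, b1, a2, b2}).filter (fun u => g u = X) with hFdef
      have hUF : (P \ {a1, b1, a2, b2}).card ≤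
          (F a1).card + (F b1).card + (F a2).card + (F b2).card := by
        have hsub : P \ {a1, b1, a2, b2} ⊆ F a1 ∪ F b1 ∪ F a2 ∪ F b2 := by
          intro u hu
          have hmem := (hg u hu).1
          simp only [mem_insert, mem_singleton] at hmem
          simp only [hFdef, mem_union, mem_filter]
          rcases hmem with h | h | h | h
          · exact Or.inl (Or.inl (Or.inl ⟨hu, h⟩))
          · exact Or.inl (Or.inl (Or.inr ⟨hu, h⟩))
          · exact Or.inl (Or.inr ⟨hu, h⟩)
          · exact Or.inr ⟨hu, h⟩
        have e0 := card_le_card hsub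
        have e1 := card_union_le (F a1 ∪ F b1 ∪ F a2) (F b2)
        have e2 := card_union_le (F a1 ∪ F b1) (F a2)
        have e3 := card_union_le (F a1) (F b1)
        omega
      have hFP : ∀ X, ∀ u ∈ F X, u ∈ P \ {a1, b1, a2, b2} ∧ g u = X := by
        intro X u hu
        rw [hFdef] at hu
        exact mem_filter.mp hu
      have fin2 : ∀ B Bm Co Co' : Finset V, B ∈ P → Bm ∈ P → Co ∈ P → Co' ∈ P →
          Bm ≠ Co → Bm ≠ Co' → G.IsDominatingSet (Bm ∪ B) → G.IsDominatingSet (Co ∪ Co') →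
          (∀ u ∈ P \ {a1, b1, a2, b2}, u ≠ Bm ∧ u ≠ Co ∧ u ≠ Co') →
          3 ≤ (F B).card → False := by
        intro B Bm Co Co' hBP hBmP hCoP hCo'P hBmCo hBmCo' hdBm hdCo hneu h3
        obtain ⟨v1, v2, v3, hv1, hv2, hv3, e12, e13, e23⟩ := ex3 h3
        obtain ⟨hv1U, hgv1⟩ := hFP B v1 hv1
        obtain ⟨hv2U, hgv2⟩ := hFP B v2 hv2
        obtain ⟨hv3U, hgv3⟩ := hFP B v3 hv3
        obtain ⟨w, hw⟩ := hmiss B hBP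
        have m1 : (v1 ∩ cN G w).Nonempty := meet_partner (hgv1 ▸ (hg v1 hv1U).2) hw
        have m2 : (v2 ∩ cN G w).Nonempty := meet_partner (hgv2 ▸ (hg v2 hv2U).2) hw
        have m3 : (v3 ∩ cN G w).Nonempty := meet_partner (hgv3 ▸ (hg v3 hv3U).2) hw
        have mBm : (Bm ∩ cN G w).Nonempty := meet_partner hdBm hw
        rcases meet_or hdCo (w := w) with mc | mc
        · exact endg hdeg hdis w (mem_sdiff.mp hv1U).1 (mem_sdiff.mp hv2U).1
            (mem_sdiff.mp hv3U).1 hBmP hCoP e12 e13 (hneu v1 hv1U).1 (hneu v1 hv1U).2.1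
            e23 (hneu v2 hv2U).1 (hneu v2 hv2U).2.1 (hneu v3 hv3U).1 (hneu v3 hv3U).2.1
            hBmCo m1 m2 m3 mBm mc
        · exact endg hdeg hdis w (mem_sdiff.mp hv1U).1 (mem_sdiff.mp hv2U).1
            (mem_sdiff.mp hv3U).1 hBmP hCo'P e12 e13 (hneu v1 hv1U).1 (hneu v1 hv1U).2.2
            e23 (hneu v2 hv2U).1 (hneu v2 hv2U).2.2 (hneu v3 hv3U).1 (hneu v3 hv3U).2.2
            hBmCo' m1 m2 m3 mBm mc
      by_cases c1 : 3 ≤ (F a1).card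
      · exact fin2 a1 b1 a2 b2 ha1 hb1 ha2 hb2 h23 h24 ((union_comm a1 b1) ▸ hd1) hd2
          (fun u hu => ⟨(hmemU u hu).2.1, (hmemU u hu).2.2.1, (hmemU u hu).2.2.2⟩) c1
      · by_cases c2 : 3 ≤ (F b1).card
        · exact fin2 b1 a1 a2 b2 hb1 ha1 ha2 hb2 h13 h14 hd1 hd2
            (fun u hu => ⟨(hmemU u hu).1, (hmemU u hu).2.2.1, (hmemU u hu).2.2.2⟩) c2
        · by_cases c3 : 3 ≤ (F a2).card
          · exact fin2 a2 b2 a1 b1 ha2 hb2 ha1 hb1 (Ne.symm h14) (Ne.symm h24)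
              ((union_comm a2 b2) ▸ hd2) hd1
              (fun u hu => ⟨(hmemU u hu).2.2.2, (hmemU u hu).1, (hmemU u hu).2.1⟩) c3
          · by_cases c4 : 3 ≤ (F b2).card
            · exact fin2 b2 a2 a1 b1 hb2 ha2 ha1 hb1 (Ne.symm h13) (Ne.symm h23) hd2 hd1
                (fun u hu => ⟨(hmemU u hu).2.2.1, (hmemU u hu).1, (hmemU u hu).2.1⟩) c4
            · -- all fibers small : at least three nonempty fibers give a 3-matching
              have mk3 : ∀ X Y Z : Finset V, X ∈ P → Y ∈ P → Z ∈ P →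
                  X ∈ ({a1, b1, a2, b2} : Finset (Finset V)) →
                  Y ∈ ({a1, b1, a2, b2} : Finset (Finset V)) →
                  Z ∈ ({a1, b1, a2, b2} : Finset (Finset V)) →
                  X ≠ Y → X ≠ Z → Y ≠ Z →
                  (F X).Nonempty → (F Y).Nonempty → (F Z).Nonempty → False := by
                intro X Y Z hXP hYP hZP hXM hYM hZM hXY hXZ hYZ hFX hFY hFZ
                obtain ⟨ux, hux⟩ := hFX
                obtain ⟨uy, huy⟩ := hFY
                obtain ⟨uz, huz⟩ := hFZ
                obtain ⟨huxU, hgx⟩ := hFP X ux hux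
                obtain ⟨huyU, hgy⟩ := hFP Y uy huy
                obtain ⟨huzU, hgz⟩ := hFP Z uz huz
                have hnM : ∀ u ∈ P \ {a1, b1, a2, b2},
                    ∀ W ∈ ({a1, b1, a2, b2} : Finset (Finset V)), u ≠ W := by
                  intro u hu W hW hEq
                  exact (mem_sdiff.mp hu).2 (hEq ▸ hW)
                have exy : ux ≠ uy := fun hEq => hXY (by rw [← hgx, hEq, hgy])
                have exz : ux ≠ uz := fun hEq => hXZ (by rw [← hgx, hEq, hgz])
                have eyz : uy ≠ uz := fun hEq => hYZ (by rw [← hgy, hEq, hgz])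
                refine hM3 ⟨ux, X, uy, Y, uz, Z,
                  ⟨(mem_sdiff.mp huxU).1, hXP, hnM ux huxU X hXM, hgx ▸ (hg ux huxU).2⟩,
                  ⟨(mem_sdiff.mp huyU).1, hYP, hnM uy huyU Y hYM, hgy ▸ (hg uy huyU).2⟩,
                  ⟨(mem_sdiff.mp huzU).1, hZP, hnM uz huzU Z hZM, hgz ▸ (hg uz huzU).2⟩, ?_⟩
                simp
                exact ⟨⟨hnM ux huxU X hXM, exy, hnM ux huxU Y hYM, exz, hnM ux huxU Z hZM⟩,
                  ⟨Ne.symm (hnM uy huyU X hXM), hXY, Ne.symm (hnM uz huzU X hXM), hXZ⟩,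
                  ⟨hnM uy huyU Y hYM, eyz, hnM uy huyU Z hZM⟩,
                  ⟨Ne.symm (hnM uz huzU Y hYM), hYZ⟩, hnM uz huzU Z hZM⟩
              have ma1 : a1 ∈ ({a1, b1, a2, b2} : Finset (Finset V)) := by simp
              have mb1 : b1 ∈ ({a1, b1, a2, b2} : Finset (Finset V)) := by simp
              have ma2 : a2 ∈ ({a1, b1, a2, b2} : Finset (Finset V)) := by simp
              have mb2 : b2 ∈ ({a1, b1, a2, b2} : Finset (Finset V)) := by simp
              by_cases z1 : (F a1).card = 0 <;> by_cases z2 : (F b1).card = 0 <;>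
                by_cases z3 : (F a2).card = 0 <;> by_cases z4 : (F b2).card = 0 <;>
                first
                | omega
                | exact mk3 b1 a2 b2 hb1 ha2 hb2 mb1 ma2 mb2 h23 h24 h34
                    (card_pos.mp (by omega)) (card_pos.mp (by omega)) (card_pos.mp (by omega))
                | exact mk3 a1 a2 b2 ha1 ha2 hb2 ma1 ma2 mb2 h13 h14 h34
                    (card_pos.mp (by omega)) (card_pos.mp (by omega)) (card_pos.mp (by omega))
                | exact mk3 a1 b1 b2 ha1 hb1 hb2 ma1 mb1 mb2 h12 h14 h24
                    (card_pos.mp (by omega)) (card_pos.mp (by omega)) (card_pos.mp (by omega))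
                | exact mk3 a1 b1 a2 ha1 hb1 ha2 ma1 mb1 ma2 h12 h13 h23
                    (card_pos.mp (by omega)) (card_pos.mp (by omega)) (card_pos.mp (by omega))

    · -- k = 1 : a single pair, every other part partners into it
      obtain ⟨a1, b1, ha1, hb1, hne1, hd1⟩ := hM1
      have hMstcard : ({a1, b1} : Finset (Finset V)).card ≤ 2 :=
        le_trans (card_insert_le _ _) (by simp)
      have hUcard : 8 ≤ (P \ {a1, b1}).card := by
        have := Finset.card_le_card_sdiff_add_card (s := P) (t := {a1, b1})
        omega
      have hup : ∀ u ∈ P \ {a1, b1}, ∃ B ∈ ({a1, b1} : Finset (Finset V)),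
          G.IsDominatingSet (u ∪ B) := by
        intro u hu
        obtain ⟨huP, hunM⟩ := mem_sdiff.mp hu
        simp only [mem_insert, mem_singleton] at hunM
        push_neg at hunM
        obtain ⟨hua1, hub1⟩ := hunM
        obtain ⟨p, -, hpP, hupne, hd⟩ := hpartner u huP
        by_cases hpM : p ∈ ({a1, b1} : Finset (Finset V))
        · exact ⟨p, hpM, hd⟩
        · exfalso
          simp only [mem_insert, mem_singleton] at hpM
          push_neg at hpM
          obtain ⟨hpa1, hpb1⟩ := hpM
          refine hM2 ⟨a1, b1, u, p, ⟨ha1, hb1, hne1, hd1⟩, ⟨huP, hpP, hupne, hd⟩, ?_⟩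
          simp
          exact ⟨⟨hne1, Ne.symm hua1, Ne.symm hpa1⟩, ⟨Ne.symm hub1, Ne.symm hpb1⟩, hupne⟩
      choose fch hf1 hf2 using hup
      set g : Finset V → Finset V :=
        fun u => if h : u ∈ P \ {a1, b1} then fch u h else ∅ with hgdef
      have hg : ∀ u ∈ P \ {a1, b1}, g u ∈ ({a1, b1} : Finset (Finset V)) ∧
          G.IsDominatingSet (u ∪ g u) := by
        intro u hu
        rw [hgdef]
        simp only [dif_pos hu]
        exact ⟨hf1 u hu, hf2 u hu⟩
      have key : ∃ B Bm, B ∈ P ∧ Bm ∈ P ∧ Bm ≠ B ∧ G.IsDominatingSet (Bm ∪ B) ∧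
          ∀ u ∈ P \ {a1, b1}, G.IsDominatingSet (u ∪ B) ∧ u ≠ B ∧ u ≠ Bm := by
        have hmem : ∀ u ∈ P \ {a1, b1}, u ≠ a1 ∧ u ≠ b1 := by
          intro u hu
          have := (mem_sdiff.mp hu).2
          simp only [mem_insert, mem_singleton] at this
          push_neg at this
          exact this
        by_cases hfa : ∃ u ∈ P \ {a1, b1}, g u = a1
        · by_cases hfb : ∃ u' ∈ P \ {a1, b1}, g u' = b1
          · exfalso
            obtain ⟨u, hu, hgu⟩ := hfa
            obtain ⟨u', hu', hgu'⟩ := hfb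
            have huu' : u ≠ u' := by
              intro hEq
              rw [hEq, hgu'] at hgu
              exact hne1 hgu.symm
            refine hM2 ⟨u, a1, u', b1,
              ⟨(mem_sdiff.mp hu).1, ha1, (hmem u hu).1, hgu ▸ (hg u hu).2⟩,
              ⟨(mem_sdiff.mp hu').1, hb1, (hmem u' hu').2, hgu' ▸ (hg u' hu').2⟩, ?_⟩
            simp
            exact ⟨⟨(hmem u hu).1, huu', (hmem u hu).2⟩,
              ⟨Ne.symm (hmem u' hu').1, hne1⟩, (hmem u' hu').2⟩
          · push_neg at hfb
            refine ⟨a1, b1, ha1, hb1, Ne.symm hne1, (union_comm a1 b1) ▸ hd1, ?_⟩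
            intro u hu
            have hga : g u = a1 := by
              have := (hg u hu).1
              simp only [mem_insert, mem_singleton] at this
              rcases this with h | h
              · exact h
              · exact absurd h (hfb u hu)
            exact ⟨hga ▸ (hg u hu).2, (hmem u hu).1, (hmem u hu).2⟩
        · push_neg at hfa
          refine ⟨b1, a1, hb1, ha1, hne1, hd1, ?_⟩
          intro u hu
          have hgb : g u = b1 := by
            have := (hg u hu).1
            simp only [mem_insert, mem_singleton] at this
            rcases this with h | h
            · exact absurd h (hfa u hu)
            · exact h
          exact ⟨hgb ▸ (hg u hu).2, (hmem u hu).2, (hmem u hu).1⟩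
      obtain ⟨B, Bm, hBP, hBmP, hBmB, hdomBmB, hAll⟩ := key
      obtain ⟨u1, u2, u3, u4, hu1, hu2, hu3, hu4, d12, d13, d14, d23, d24, d34⟩ :=
        ex4 (show 4 ≤ (P \ {a1, b1}).card by omega)
      obtain ⟨w, hw⟩ := hmiss B hBP
      have m1 : (u1 ∩ cN G w).Nonempty := meet_partner (hAll u1 hu1).1 hw
      have m2 : (u2 ∩ cN G w).Nonempty := meet_partner (hAll u2 hu2).1 hw
      have m3 : (u3 ∩ cN G w).Nonempty := meet_partner (hAll u3 hu3).1 hw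
      have m4 : (u4 ∩ cN G w).Nonempty := meet_partner (hAll u4 hu4).1 hw
      have mB : (Bm ∩ cN G w).Nonempty := meet_partner hdomBmB hw
      have hu1Bm : u1 ≠ Bm := (hAll u1 hu1).2.2
      have hu2Bm : u2 ≠ Bm := (hAll u2 hu2).2.2
      have hu3Bm : u3 ≠ Bm := (hAll u3 hu3).2.2
      have hu4Bm : u4 ≠ Bm := (hAll u4 hu4).2.2
      exact endg hdeg hdis w (mem_sdiff.mp hu1).1 (mem_sdiff.mp hu2).1
        (mem_sdiff.mp hu3).1 (mem_sdiff.mp hu4).1 hBmP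
        d12 d13 d14 hu1Bm d23 d24 hu2Bm d34 hu3Bm hu4Bm m1 m2 m3 m4 mB

end UB

namespace LB

/-- adjacency: K4 blocks on [0, 4m), a triangular prism on [4m, 4m+6) -/
def adjP (m x y : ℕ) : Prop :=
  x ≠ y ∧ ((x < 4*m ∧ y < 4*m ∧ x/4 = y/4) ∨
    (4*m ≤ x ∧ 4*m ≤ y ∧ ((x-4*m)/3 = (y-4*m)/3 ∨ (x-4*m) % 3 = (y-4*m) % 3)))

instance (m x y : ℕ) : Decidable (adjP m x y) := by
  unfold adjP; infer_instance

def myGraph (m N : ℕ) : SimpleGraph (Fin N) where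
  Adj u v := adjP m u v
  symm := by
    constructor
    intro u v h
    unfold adjP at *
    omega
  loopless := by
    constructor
    intro v h
    unfold adjP at h
    omega

instance (m N : ℕ) : DecidableRel (myGraph m N).Adj :=
  fun u v => inferInstanceAs (Decidable (adjP m u v))

lemma adj_iff {m N : ℕ} {u v : Fin N} :
    (myGraph m N).Adj u v ↔ adjP m u v := Iff.rfl

lemma nbr_card_3 {m N : ℕ} (v n1 n2 n3 : Fin N)
    (h : (myGraph m N).neighborFinset v = {n1, n2, n3})
    (d12 : n1 ≠ n2) (d13 : n1 ≠ n3) (d23 : n2 ≠ n3) :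
    (myGraph m N).degree v = 3 := by
  rw [SimpleGraph.degree, h, card_insert_of_notMem (by simp [d12, d13]),
    card_insert_of_notMem (by simp [d23]), card_singleton]

lemma regular (m N : ℕ) (hm : 3 ≤ m) (hN : N = 4*m ∨ N = 4*m + 6) :
    (myGraph m N).IsRegularOfDegree 3 := by
  intro v
  have hvlt := v.isLt
  by_cases hv : (v : ℕ) < 4*m
  · -- block vertex: neighbours are the other three in its block
    set b : ℕ := (v : ℕ) / 4 with hb
    have hbound : 4*b + 3 < N := by omega
    have hrep : (v:ℕ) = 4*b ∨ (v:ℕ) = 4*b+1 ∨ (v:ℕ) = 4*b+2 ∨ (v:ℕ) = 4*b+3 := by omega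
    -- the four block elements
    have key : ∀ x : Fin N, (myGraph m N).Adj v x ↔
        ((x:ℕ) = 4*b ∨ (x:ℕ) = 4*b+1 ∨ (x:ℕ) = 4*b+2 ∨ (x:ℕ) = 4*b+3) ∧ (x:ℕ) ≠ (v:ℕ) := by
      intro x
      rw [adj_iff]
      unfold adjP
      have := x.isLt
      omega
    rcases hrep with h0 | h0 | h0 | h0
    · refine nbr_card_3 v ⟨4*b+1, by omega⟩ ⟨4*b+2, by omega⟩ ⟨4*b+3, by omega⟩ ?_
        (by simp [Fin.ext_iff]) (by simp [Fin.ext_iff]) (by simp [Fin.ext_iff])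
      ext x
      rw [SimpleGraph.mem_neighborFinset, key x]
      simp only [mem_insert, mem_singleton, Fin.ext_iff]
      omega
    · refine nbr_card_3 v ⟨4*b, by omega⟩ ⟨4*b+2, by omega⟩ ⟨4*b+3, by omega⟩ ?_
        (by simp [Fin.ext_iff]) (by simp [Fin.ext_iff]) (by simp [Fin.ext_iff])
      ext x
      rw [SimpleGraph.mem_neighborFinset, key x]
      simp only [mem_insert, mem_singleton, Fin.ext_iff]
      omega
    · refine nbr_card_3 v ⟨4*b, by omega⟩ ⟨4*b+1, by omega⟩ ⟨4*b+3, by omega⟩ ?_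
        (by simp [Fin.ext_iff]) (by simp [Fin.ext_iff]) (by simp [Fin.ext_iff])
      ext x
      rw [SimpleGraph.mem_neighborFinset, key x]
      simp only [mem_insert, mem_singleton, Fin.ext_iff]
      omega
    · refine nbr_card_3 v ⟨4*b, by omega⟩ ⟨4*b+1, by omega⟩ ⟨4*b+2, by omega⟩ ?_
        (by simp [Fin.ext_iff]) (by simp [Fin.ext_iff]) (by simp [Fin.ext_iff])
      ext x
      rw [SimpleGraph.mem_neighborFinset, key x]
      simp only [mem_insert, mem_singleton, Fin.ext_iff]
      omega
  · -- prism vertex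
    have hN6 : N = 4*m + 6 := by omega
    have key : ∀ x : Fin N, (myGraph m N).Adj v x ↔ adjP m v x := fun _ => Iff.rfl
    have h6 : (v:ℕ) = 4*m ∨ (v:ℕ) = 4*m+1 ∨ (v:ℕ) = 4*m+2 ∨ (v:ℕ) = 4*m+3 ∨
        (v:ℕ) = 4*m+4 ∨ (v:ℕ) = 4*m+5 := by omega
    rcases h6 with h0 | h0 | h0 | h0 | h0 | h0
    · refine nbr_card_3 v ⟨4*m+1, by omega⟩ ⟨4*m+2, by omega⟩ ⟨4*m+3, by omega⟩ ?_
        (by simp [Fin.ext_iff]) (by simp [Fin.ext_iff]) (by simp [Fin.ext_iff])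
      ext x
      rw [SimpleGraph.mem_neighborFinset, key x]
      unfold adjP
      have := x.isLt
      simp only [mem_insert, mem_singleton, Fin.ext_iff]
      omega
    · refine nbr_card_3 v ⟨4*m, by omega⟩ ⟨4*m+2, by omega⟩ ⟨4*m+4, by omega⟩ ?_
        (by simp [Fin.ext_iff]) (by simp [Fin.ext_iff]) (by simp [Fin.ext_iff])
      ext x
      rw [SimpleGraph.mem_neighborFinset, key x]
      unfold adjP
      have := x.isLt
      simp only [mem_insert, mem_singleton, Fin.ext_iff]
      omega
    · refine nbr_card_3 v ⟨4*m, by omega⟩ ⟨4*m+1, by omega⟩ ⟨4*m+5, by omega⟩ ?_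
        (by simp [Fin.ext_iff]) (by simp [Fin.ext_iff]) (by simp [Fin.ext_iff])
      ext x
      rw [SimpleGraph.mem_neighborFinset, key x]
      unfold adjP
      have := x.isLt
      simp only [mem_insert, mem_singleton, Fin.ext_iff]
      omega
    · refine nbr_card_3 v ⟨4*m, by omega⟩ ⟨4*m+4, by omega⟩ ⟨4*m+5, by omega⟩ ?_
        (by simp [Fin.ext_iff]) (by simp [Fin.ext_iff]) (by simp [Fin.ext_iff])
      ext x
      rw [SimpleGraph.mem_neighborFinset, key x]
      unfold adjP
      have := x.isLt
      simp only [mem_insert, mem_singleton, Fin.ext_iff]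
      omega
    · refine nbr_card_3 v ⟨4*m+1, by omega⟩ ⟨4*m+3, by omega⟩ ⟨4*m+5, by omega⟩ ?_
        (by simp [Fin.ext_iff]) (by simp [Fin.ext_iff]) (by simp [Fin.ext_iff])
      ext x
      rw [SimpleGraph.mem_neighborFinset, key x]
      unfold adjP
      have := x.isLt
      simp only [mem_insert, mem_singleton, Fin.ext_iff]
      omega
    · refine nbr_card_3 v ⟨4*m+2, by omega⟩ ⟨4*m+3, by omega⟩ ⟨4*m+4, by omega⟩ ?_
        (by simp [Fin.ext_iff]) (by simp [Fin.ext_iff]) (by simp [Fin.ext_iff])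
      ext x
      rw [SimpleGraph.mem_neighborFinset, key x]
      unfold adjP
      have := x.isLt
      simp only [mem_insert, mem_singleton, Fin.ext_iff]
      omega

end LB

namespace LB2

open LB

def pred (m : ℕ) : ℕ → ℕ → Prop
  | 0 => fun v => v = 0
  | 1 => fun v => v = 4
  | 2 => fun v => v = 9
  | 3 => fun v => v = 2
  | 4 => fun v => v = 7
  | 5 => fun v => v < 4*m ∧ v % 4 = 0 ∧ v ≠ 0 ∧ v ≠ 4
  | 6 => fun v => (v < 4*m ∧ v % 4 = 1 ∧ v ≠ 9) ∨ v = 4*m ∨ v = 4*m+4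
  | 7 => fun v => (v < 4*m ∧ v % 4 = 2 ∧ v ≠ 2) ∨ v = 4*m+1 ∨ v = 4*m+5
  | 8 => fun v => (v < 4*m ∧ v % 4 = 3 ∧ v ≠ 7) ∨ v = 4*m+2 ∨ v = 4*m+3
  | _+9 => fun _ => False

instance (m i v : ℕ) : Decidable (pred m i v) := by
  unfold pred
  rcases i with _|_|_|_|_|_|_|_|_|i <;> exact inferInstanceAs (Decidable _)

def pt (m N : ℕ) (i : Fin 9) : Finset (Fin N) :=
  univ.filter (fun v => pred m (i : ℕ) (v : ℕ))

lemma mem_pt {m N : ℕ} {i : Fin 9} {v : Fin N} :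
    v ∈ pt m N i ↔ pred m (i : ℕ) (v : ℕ) := by
  simp [pt]

def witv (i : Fin 9) : ℕ :=
  match (i : ℕ) with
  | 0 => 0 | 1 => 4 | 2 => 9 | 3 => 2 | 4 => 7 | 5 => 8 | 6 => 1 | 7 => 6 | _ => 3

lemma witv_le (i : Fin 9) : witv i ≤ 9 := by
  fin_cases i <;> decide

variable {m N : ℕ}

lemma wit_mem (hm : 3 ≤ m) (i j : Fin 9) (x : Fin N) (hx : (x : ℕ) = witv i) :
    x ∈ pt m N j ↔ i = j := by
  fin_cases i <;> fin_cases j <;>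
    simp only [witv] at hx <;>
    simp [mem_pt, pred, Fin.ext_iff] <;> omega

lemma pt_nonempty (hm : 3 ≤ m) (hN : N = 4*m ∨ N = 4*m + 6) (i : Fin 9) :
    (pt m N i).Nonempty := by
  have hlt : witv i < N := by have := witv_le i; omega
  exact ⟨⟨witv i, hlt⟩, (wit_mem hm i i _ rfl).mpr rfl⟩

lemma pt_inj (hm : 3 ≤ m) (hN : N = 4*m ∨ N = 4*m + 6) :
    Function.Injective (pt m N) := by
  intro i j hij
  have hlt : witv i < N := by have := witv_le i; omega
  have h1 : (⟨witv i, hlt⟩ : Fin N) ∈ pt m N i := (wit_mem hm i i _ rfl).mpr rfl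
  rw [hij] at h1
  exact (wit_mem hm i j _ rfl).mp h1

lemma pt_disj (hm : 3 ≤ m) {i j : Fin 9} (hij : i ≠ j) :
    Disjoint (pt m N i) (pt m N j) := by
  rw [disjoint_left]
  intro v hvi hvj
  rw [mem_pt] at hvi hvj
  have hvl := v.isLt
  fin_cases i <;> fin_cases j <;>
    first
    | exact absurd rfl hij
    | (simp only [pred, Fin.isValue] at hvi hvj; omega)

lemma pt_cover (hm : 3 ≤ m) (hN : N = 4*m ∨ N = 4*m + 6) (v : Fin N) :
    ∃ i : Fin 9, v ∈ pt m N i := by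
  have hvl := v.isLt
  have h : pred m 0 (v:ℕ) ∨ pred m 1 (v:ℕ) ∨ pred m 2 (v:ℕ) ∨ pred m 3 (v:ℕ) ∨
      pred m 4 (v:ℕ) ∨ pred m 5 (v:ℕ) ∨ pred m 6 (v:ℕ) ∨ pred m 7 (v:ℕ) ∨
      pred m 8 (v:ℕ) := by
    simp only [pred]
    omega
  rcases h with h|h|h|h|h|h|h|h|h
  · exact ⟨0, mem_pt.mpr h⟩
  · exact ⟨1, mem_pt.mpr h⟩
  · exact ⟨2, mem_pt.mpr h⟩
  · exact ⟨3, mem_pt.mpr h⟩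
  · exact ⟨4, mem_pt.mpr h⟩
  · exact ⟨5, mem_pt.mpr h⟩
  · exact ⟨6, mem_pt.mpr h⟩
  · exact ⟨7, mem_pt.mpr h⟩
  · exact ⟨8, mem_pt.mpr h⟩

lemma dom_of (S : Finset (Fin N)) (u v : Fin N) (hu : u ∈ S)
    (h : (u:ℕ) = (v:ℕ) ∨ adjP m (u:ℕ) (v:ℕ)) : (myGraph m N).DominatesVert S v := by
  rcases h with h | h
  · exact Or.inl (by rwa [show u = v from Fin.val_injective h] at hu)
  · exact Or.inr ⟨u, hu, h⟩

lemma not_dom_of (S : Finset (Fin N)) (w : Fin N)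
    (h : ∀ u ∈ S, ¬((u:ℕ) = (w:ℕ) ∨ adjP m (u:ℕ) (w:ℕ))) :
    ¬ (myGraph m N).IsDominatingSet S := by
  intro hd
  rcases hd w with hw | ⟨u, hu, ha⟩
  · exact h w hw (Or.inl rfl)
  · exact h u hu (Or.inr ha)

lemma domU07 (hm : 3 ≤ m) (hN : N = 4*m ∨ N = 4*m + 6) :
    (myGraph m N).IsDominatingSet (pt m N 0 ∪ pt m N 7) := by
  intro v
  have hvl := v.isLt
  by_cases hv : (v:ℕ) < 4*m
  · by_cases h0 : (v:ℕ)/4 = 0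
    · refine dom_of _ ⟨0, by omega⟩ v (mem_union_left _ (mem_pt.mpr ?_)) ?_
      · simp [pred]
      · unfold adjP; simp only [Fin.val_mk]; omega
    · refine dom_of _ ⟨4*((v:ℕ)/4)+2, by omega⟩ v (mem_union_right _ (mem_pt.mpr ?_)) ?_
      · first
        | (simp [pred]; done)
        | (simp only [pred, Fin.isValue]; omega)
      · unfold adjP; simp only [Fin.val_mk]; omega
  · have hN6 : N = 4*m+6 := by omega
    by_cases h1 : (v:ℕ) = 4*m+3 ∨ (v:ℕ) = 4*m+5
    · refine dom_of _ ⟨4*m+5, by omega⟩ v (mem_union_right _ (mem_pt.mpr ?_)) ?_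
      · first
        | (simp [pred]; done)
        | (simp only [pred, Fin.isValue]; omega)
      · unfold adjP; simp only [Fin.val_mk]; omega
    · refine dom_of _ ⟨4*m+1, by omega⟩ v (mem_union_right _ (mem_pt.mpr ?_)) ?_
      · first
        | (simp [pred]; done)
        | (simp only [pred, Fin.isValue]; omega)
      · unfold adjP; simp only [Fin.val_mk]; omega

lemma domU18 (hm : 3 ≤ m) (hN : N = 4*m ∨ N = 4*m + 6) :
    (myGraph m N).IsDominatingSet (pt m N 1 ∪ pt m N 8) := by
  intro v
  have hvl := v.isLt
  by_cases hv : (v:ℕ) < 4*m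
  · by_cases h0 : (v:ℕ)/4 = 1
    · refine dom_of _ ⟨4, by omega⟩ v (mem_union_left _ (mem_pt.mpr ?_)) ?_
      · simp [pred]
      · unfold adjP; simp only [Fin.val_mk]; omega
    · refine dom_of _ ⟨4*((v:ℕ)/4)+3, by omega⟩ v (mem_union_right _ (mem_pt.mpr ?_)) ?_
      · first
        | (simp [pred]; done)
        | (simp only [pred, Fin.isValue]; omega)
      · unfold adjP; simp only [Fin.val_mk]; omega
  · have hN6 : N = 4*m+6 := by omega
    by_cases h1 : (v:ℕ) = 4*m+3 ∨ (v:ℕ) = 4*m+4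
    · refine dom_of _ ⟨4*m+3, by omega⟩ v (mem_union_right _ (mem_pt.mpr ?_)) ?_
      · first
        | (simp [pred]; done)
        | (simp only [pred, Fin.isValue]; omega)
      · unfold adjP; simp only [Fin.val_mk]; omega
    · refine dom_of _ ⟨4*m+2, by omega⟩ v (mem_union_right _ (mem_pt.mpr ?_)) ?_
      · first
        | (simp [pred]; done)
        | (simp only [pred, Fin.isValue]; omega)
      · unfold adjP; simp only [Fin.val_mk]; omega

lemma domU26 (hm : 3 ≤ m) (hN : N = 4*m ∨ N = 4*m + 6) :
    (myGraph m N).IsDominatingSet (pt m N 2 ∪ pt m N 6) := by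
  intro v
  have hvl := v.isLt
  by_cases hv : (v:ℕ) < 4*m
  · by_cases h0 : (v:ℕ)/4 = 2
    · refine dom_of _ ⟨9, by omega⟩ v (mem_union_left _ (mem_pt.mpr ?_)) ?_
      · simp [pred]
      · unfold adjP; simp only [Fin.val_mk]; omega
    · refine dom_of _ ⟨4*((v:ℕ)/4)+1, by omega⟩ v (mem_union_right _ (mem_pt.mpr ?_)) ?_
      · first
        | (simp [pred]; done)
        | (simp only [pred, Fin.isValue]; omega)
      · unfold adjP; simp only [Fin.val_mk]; omega
  · have hN6 : N = 4*m+6 := by omega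
    by_cases h1 : (v:ℕ) < 4*m+4
    · refine dom_of _ ⟨4*m, by omega⟩ v (mem_union_right _ (mem_pt.mpr ?_)) ?_
      · first
        | (simp [pred]; done)
        | (simp only [pred, Fin.isValue]; omega)
      · unfold adjP; simp only [Fin.val_mk]; omega
    · refine dom_of _ ⟨4*m+4, by omega⟩ v (mem_union_right _ (mem_pt.mpr ?_)) ?_
      · first
        | (simp [pred]; done)
        | (simp only [pred, Fin.isValue]; omega)
      · unfold adjP; simp only [Fin.val_mk]; omega

lemma domU37 (hm : 3 ≤ m) (hN : N = 4*m ∨ N = 4*m + 6) :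
    (myGraph m N).IsDominatingSet (pt m N 3 ∪ pt m N 7) := by
  intro v
  have hvl := v.isLt
  by_cases hv : (v:ℕ) < 4*m
  · by_cases h0 : (v:ℕ)/4 = 0
    · refine dom_of _ ⟨2, by omega⟩ v (mem_union_left _ (mem_pt.mpr ?_)) ?_
      · simp [pred]
      · unfold adjP; simp only [Fin.val_mk]; omega
    · refine dom_of _ ⟨4*((v:ℕ)/4)+2, by omega⟩ v (mem_union_right _ (mem_pt.mpr ?_)) ?_
      · first
        | (simp [pred]; done)
        | (simp only [pred, Fin.isValue]; omega)
      · unfold adjP; simp only [Fin.val_mk]; omega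
  · have hN6 : N = 4*m+6 := by omega
    by_cases h1 : (v:ℕ) = 4*m+3 ∨ (v:ℕ) = 4*m+5
    · refine dom_of _ ⟨4*m+5, by omega⟩ v (mem_union_right _ (mem_pt.mpr ?_)) ?_
      · first
        | (simp [pred]; done)
        | (simp only [pred, Fin.isValue]; omega)
      · unfold adjP; simp only [Fin.val_mk]; omega
    · refine dom_of _ ⟨4*m+1, by omega⟩ v (mem_union_right _ (mem_pt.mpr ?_)) ?_
      · first
        | (simp [pred]; done)
        | (simp only [pred, Fin.isValue]; omega)
      · unfold adjP; simp only [Fin.val_mk]; omega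

lemma domU48 (hm : 3 ≤ m) (hN : N = 4*m ∨ N = 4*m + 6) :
    (myGraph m N).IsDominatingSet (pt m N 4 ∪ pt m N 8) := by
  intro v
  have hvl := v.isLt
  by_cases hv : (v:ℕ) < 4*m
  · by_cases h0 : (v:ℕ)/4 = 1
    · refine dom_of _ ⟨7, by omega⟩ v (mem_union_left _ (mem_pt.mpr ?_)) ?_
      · simp [pred]
      · unfold adjP; simp only [Fin.val_mk]; omega
    · refine dom_of _ ⟨4*((v:ℕ)/4)+3, by omega⟩ v (mem_union_right _ (mem_pt.mpr ?_)) ?_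
      · first
        | (simp [pred]; done)
        | (simp only [pred, Fin.isValue]; omega)
      · unfold adjP; simp only [Fin.val_mk]; omega
  · have hN6 : N = 4*m+6 := by omega
    by_cases h1 : (v:ℕ) = 4*m+3 ∨ (v:ℕ) = 4*m+4
    · refine dom_of _ ⟨4*m+3, by omega⟩ v (mem_union_right _ (mem_pt.mpr ?_)) ?_
      · first
        | (simp [pred]; done)
        | (simp only [pred, Fin.isValue]; omega)
      · unfold adjP; simp only [Fin.val_mk]; omega
    · refine dom_of _ ⟨4*m+2, by omega⟩ v (mem_union_right _ (mem_pt.mpr ?_)) ?_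
      · first
        | (simp [pred]; done)
        | (simp only [pred, Fin.isValue]; omega)
      · unfold adjP; simp only [Fin.val_mk]; omega

lemma domU56 (hm : 3 ≤ m) (hN : N = 4*m ∨ N = 4*m + 6) :
    (myGraph m N).IsDominatingSet (pt m N 5 ∪ pt m N 6) := by
  intro v
  have hvl := v.isLt
  by_cases hv : (v:ℕ) < 4*m
  · by_cases h0 : (v:ℕ)/4 = 0
    · refine dom_of _ ⟨1, by omega⟩ v (mem_union_right _ (mem_pt.mpr ?_)) ?_
      · simp [pred]; omega
      · unfold adjP; simp only [Fin.val_mk]; omega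
    · by_cases h1 : (v:ℕ)/4 = 1
      · refine dom_of _ ⟨5, by omega⟩ v (mem_union_right _ (mem_pt.mpr ?_)) ?_
        · simp [pred]; omega
        · unfold adjP; simp only [Fin.val_mk]; omega
      · by_cases h2 : (v:ℕ)/4 = 2
        · refine dom_of _ ⟨8, by omega⟩ v (mem_union_left _ (mem_pt.mpr ?_)) ?_
          · simp [pred]; omega
          · unfold adjP; simp only [Fin.val_mk]; omega
        · refine dom_of _ ⟨4*((v:ℕ)/4), by omega⟩ v (mem_union_left _ (mem_pt.mpr ?_)) ?_
          · first
            | (simp [pred]; done)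
            | (simp only [pred, Fin.isValue]; omega)
          · unfold adjP; simp only [Fin.val_mk]; omega
  · have hN6 : N = 4*m+6 := by omega
    by_cases h1 : (v:ℕ) < 4*m+4
    · refine dom_of _ ⟨4*m, by omega⟩ v (mem_union_right _ (mem_pt.mpr ?_)) ?_
      · first
        | (simp [pred]; done)
        | (simp only [pred, Fin.isValue]; omega)
      · unfold adjP; simp only [Fin.val_mk]; omega
    · refine dom_of _ ⟨4*m+4, by omega⟩ v (mem_union_right _ (mem_pt.mpr ?_)) ?_
      · first
        | (simp [pred]; done)
        | (simp only [pred, Fin.isValue]; omega)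
      · unfold adjP; simp only [Fin.val_mk]; omega

lemma not_dom (hm : 3 ≤ m) (hN : N = 4*m ∨ N = 4*m + 6) (i : Fin 9) :
    ¬ (myGraph m N).IsDominatingSet (pt m N i) := by
  fin_cases i
  · apply not_dom_of _ ⟨4, by omega⟩
    intro u hu
    rw [mem_pt] at hu
    simp only [pred, Fin.isValue] at hu
    have := u.isLt
    unfold adjP
    simp only [Fin.val_mk]
    omega
  · apply not_dom_of _ ⟨0, by omega⟩
    intro u hu
    rw [mem_pt] at hu
    simp only [pred, Fin.isValue] at hu
    have := u.isLt
    unfold adjP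
    simp only [Fin.val_mk]
    omega
  · apply not_dom_of _ ⟨0, by omega⟩
    intro u hu
    rw [mem_pt] at hu
    simp only [pred, Fin.isValue] at hu
    have := u.isLt
    unfold adjP
    simp only [Fin.val_mk]
    omega
  · apply not_dom_of _ ⟨4, by omega⟩
    intro u hu
    rw [mem_pt] at hu
    simp only [pred, Fin.isValue] at hu
    have := u.isLt
    unfold adjP
    simp only [Fin.val_mk]
    omega
  · apply not_dom_of _ ⟨0, by omega⟩
    intro u hu
    rw [mem_pt] at hu
    simp only [pred, Fin.isValue] at hu
    have := u.isLt
    unfold adjP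
    simp only [Fin.val_mk]
    omega
  · apply not_dom_of _ ⟨0, by omega⟩
    intro u hu
    rw [mem_pt] at hu
    simp only [pred, Fin.isValue] at hu
    have := u.isLt
    unfold adjP
    simp only [Fin.val_mk]
    omega
  · apply not_dom_of _ ⟨8, by omega⟩
    intro u hu
    rw [mem_pt] at hu
    simp only [pred, Fin.isValue] at hu
    have := u.isLt
    unfold adjP
    simp only [Fin.val_mk]
    omega
  · apply not_dom_of _ ⟨0, by omega⟩
    intro u hu
    rw [mem_pt] at hu
    simp only [pred, Fin.isValue] at hu
    have := u.isLt
    unfold adjP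
    simp only [Fin.val_mk]
    omega
  · apply not_dom_of _ ⟨4, by omega⟩
    intro u hu
    rw [mem_pt] at hu
    simp only [pred, Fin.isValue] at hu
    have := u.isLt
    unfold adjP
    simp only [Fin.val_mk]
    omega

def PP (m N : ℕ) : Finset (Finset (Fin N)) := image (pt m N) univ

lemma PP_card (hm : 3 ≤ m) (hN : N = 4*m ∨ N = 4*m + 6) : (PP m N).card = 9 := by
  rw [PP, card_image_of_injective _ (pt_inj hm hN), card_univ, Fintype.card_fin]

theorem PP_isCoalition (hm : 3 ≤ m) (hN : N = 4*m ∨ N = 4*m + 6) :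
    (myGraph m N).IsCoalitionPartition (PP m N) := by
  refine ⟨?_, ?_, ?_, ?_⟩
  · intro A hA
    obtain ⟨i, -, rfl⟩ := mem_image.mp hA
    exact pt_nonempty hm hN i
  · intro A hA B hB hAB
    obtain ⟨i, -, rfl⟩ := mem_image.mp hA
    obtain ⟨j, -, rfl⟩ := mem_image.mp hB
    exact pt_disj hm (fun h => hAB (by rw [h]))
  · intro v
    obtain ⟨i, hi⟩ := pt_cover hm hN v
    exact ⟨pt m N i, mem_image_of_mem _ (mem_univ i), hi⟩
  · intro A hA
    obtain ⟨i, -, rfl⟩ := mem_image.mp hA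
    fin_cases i
    · exact Or.inr ⟨not_dom hm hN 0, pt m N 7, mem_image_of_mem _ (mem_univ 7),
        (fun h => absurd (pt_inj hm hN h) (by decide)), not_dom hm hN 7, domU07 hm hN⟩
    · exact Or.inr ⟨not_dom hm hN 1, pt m N 8, mem_image_of_mem _ (mem_univ 8),
        (fun h => absurd (pt_inj hm hN h) (by decide)), not_dom hm hN 8, domU18 hm hN⟩
    · exact Or.inr ⟨not_dom hm hN 2, pt m N 6, mem_image_of_mem _ (mem_univ 6),
        (fun h => absurd (pt_inj hm hN h) (by decide)), not_dom hm hN 6, domU26 hm hN⟩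
    · exact Or.inr ⟨not_dom hm hN 3, pt m N 7, mem_image_of_mem _ (mem_univ 7),
        (fun h => absurd (pt_inj hm hN h) (by decide)), not_dom hm hN 7, domU37 hm hN⟩
    · exact Or.inr ⟨not_dom hm hN 4, pt m N 8, mem_image_of_mem _ (mem_univ 8),
        (fun h => absurd (pt_inj hm hN h) (by decide)), not_dom hm hN 8, domU48 hm hN⟩
    · exact Or.inr ⟨not_dom hm hN 5, pt m N 6, mem_image_of_mem _ (mem_univ 6),
        (fun h => absurd (pt_inj hm hN h) (by decide)), not_dom hm hN 6, domU56 hm hN⟩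
    · exact Or.inr ⟨not_dom hm hN 6, pt m N 5, mem_image_of_mem _ (mem_univ 5),
        (fun h => absurd (pt_inj hm hN h) (by decide)), not_dom hm hN 5, by rw [union_comm]; exact domU56 hm hN⟩
    · exact Or.inr ⟨not_dom hm hN 7, pt m N 3, mem_image_of_mem _ (mem_univ 3),
        (fun h => absurd (pt_inj hm hN h) (by decide)), not_dom hm hN 3, by rw [union_comm]; exact domU37 hm hN⟩
    · exact Or.inr ⟨not_dom hm hN 8, pt m N 4, mem_image_of_mem _ (mem_univ 4),
        (fun h => absurd (pt_inj hm hN h) (by decide)), not_dom hm hN 4, by rw [union_comm]; exact domU48 hm hN⟩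

end LB2


/-- For every even `n ≥ 16` there is a cubic graph of order `n` with coalition number 9. -/
theorem exists_cubic_coalition_nine_of_even (n : ℕ) (hn : 16 ≤ n) (hev : Even n) :
    ∃ G : SimpleGraph (Fin n), ∃ _ : DecidableRel G.Adj, G.IsRegularOfDegree 3 ∧ G.coalitionNumber = 9 := by
  obtain ⟨m, hm, hN⟩ : ∃ m, 3 ≤ m ∧ (n = 4*m ∨ n = 4*m+6) := by
    rcases hev with ⟨k, hk⟩
    have hmod : n % 4 = 0 ∨ n % 4 = 2 := by omega
    rcases hmod with h | h
    · exact ⟨n/4, by omega, Or.inl (by omega)⟩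
    · exact ⟨(n-6)/4, by omega, Or.inr (by omega)⟩
  have hreg := LB.regular m n hm hN
  refine ⟨LB.myGraph m n, inferInstance, hreg, ?_⟩
  unfold SimpleGraph.coalitionNumber
  apply IsGreatest.csSup_eq
  constructor
  · exact ⟨LB2.PP m n, LB2.PP_isCoalition hm hN, LB2.PP_card hm hN⟩
  · rintro k ⟨Q, hQ, rfl⟩
    obtain ⟨h1, h2, h3, h4⟩ := hQ
    exact UB.card_le_nine (by simpa using hn) (fun v => le_of_eq (hreg v)) h1 h2 h3 h4
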